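/- For every positive integer r ≥ 1, the 0-tree-cut width of the star S_{r^2} (the complete bipartite graph K_{1,r^2}) is at least r. -/

import Mathlib

open scoped Classical

noncomputable section

namespace PaperSTCW

open SimpleGraph Finset

/-- Degree of a vertex in a multiset of edges over `Sym2 W`, loops counting twice. -/
def mdeg {W : Type} (E : Multiset (Sym2 W)) (v : W) : ℕ :=
  (E.map fun e => if e = Sym2.diag v then 2 else if v ∈ e then 1 else 0).sum

/-- Remove the edges incident to `v` and, if `lift = true` and `v` was incident to exactly
two non-loop edges, add the lifted edge between their other endpoints
(this is the edge replacement performed when suppressing a degree-2 vertex). -/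
def nextE {W : Type} (lift : Bool) (v : W) (E : Multiset (Sym2 W)) : Multiset (Sym2 W) :=
  E.filter (fun e => v ∉ e) +
    (if lift then
      (match (E.filter (fun e => v ∈ e)).toList.map
          (fun e => if hm : v ∈ e then Sym2.Mem.other hm else v) with
        | [a, b] => ({s(a, b)} : Multiset (Sym2 W))
        | _ => 0)
     else 0)

/-- Exhaustively delete (and, when `lift = true`, suppress) vertices outside `X` of degree
at most `d` from the multigraph with vertex set `S` and edge multiset `E`;
returns the surviving vertex set. -/
def reduce {W : Type} (X : Finset W) (d : ℕ) (lift : Bool)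
    (S : Finset W) (E : Multiset (Sym2 W)) : Finset W :=
  if h : ∃ v, v ∈ S ∧ v ∉ X ∧ mdeg E v ≤ d then
    reduce X d lift (S.erase h.choose) (nextE lift h.choose E)
  else S
termination_by S.card
decreasing_by exact Finset.card_erase_lt_of_mem h.choose_spec.1

/-- A tree-cut decomposition of `G`: a rooted tree together with a near-partition of the
vertices of `G` into bags (each vertex lies in exactly one bag; bags may be empty). -/
structure TCD {V : Type} [Fintype V] (G : SimpleGraph V) where
  n : ℕ
  T : SimpleGraph (Fin n)
  tree : T.IsTree
  root : Fin n
  bag : Fin n → Finset V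
  partition : ∀ v : V, ∃! t, v ∈ bag t

variable {V : Type} [Fintype V] {G : SimpleGraph V}

/-- The set of nodes in the subtree rooted at `t` (those nodes all of whose walks
from the root pass through `t`). -/
def TCD.desc (D : TCD G) (t : Fin D.n) : Set (Fin D.n) :=
  {s | ∀ p : D.T.Walk D.root s, t ∈ p.support}

/-- The union of the bags of the subtree rooted at `t`. -/
def TCD.Y (D : TCD G) (t : Fin D.n) : Finset V :=
  Finset.univ.filter fun v => ∃ s, s ∈ D.desc t ∧ v ∈ D.bag s

/-- Adhesion of a node: the number of edges of `G` with exactly one endpoint in `Y t`. -/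
def TCD.adh (D : TCD G) (t : Fin D.n) : ℕ :=
  ((Finset.univ : Finset (Sym2 V)).filter fun e =>
    e ∈ G.edgeSet ∧ ∃ a b, e = s(a, b) ∧ a ∈ D.Y t ∧ b ∉ D.Y t).card

/-- The connected components of `T - t`. -/
def TCD.Cmp (D : TCD G) (t : Fin D.n) : Type :=
  (SimpleGraph.induce {s | s ≠ t} D.T).ConnectedComponent

instance (D : TCD G) (t : Fin D.n) : Fintype (D.Cmp t) := by
  unfold TCD.Cmp; infer_instance

/-- The consolidation map of the torso at `t`: vertices of the bag of `t` are kept,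
all vertices in the bags of a fixed connected component of `T - t` are consolidated
into a single vertex. -/
def TCD.toTorso (D : TCD G) (t : Fin D.n) (v : V) : V ⊕ D.Cmp t :=
  if h : ∃ s, s ≠ t ∧ v ∈ D.bag s then
    Sum.inr ((SimpleGraph.induce {s | s ≠ t} D.T).connectedComponentMk
      ⟨h.choose, h.choose_spec.1⟩)
  else Sum.inl v

/-- Vertex set of the torso at `t`. -/
def TCD.torsoS (D : TCD G) (t : Fin D.n) : Finset (V ⊕ D.Cmp t) :=
  ((D.bag t).image Sum.inl) ∪ (Finset.univ.image Sum.inr)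

/-- Edge multiset of the torso at `t` (consolidation keeps multiplicities and drops loops). -/
def TCD.torsoE (D : TCD G) (t : Fin D.n) : Multiset (Sym2 (V ⊕ D.Cmp t)) :=
  (((Finset.univ : Finset (Sym2 V)).filter fun e => e ∈ G.edgeSet).val.map
      (Sym2.map (D.toTorso t))).filter fun e => ¬ e.IsDiag

/-- Torso-size: the order of the 3-center of the torso at `t`, obtained by exhaustively
suppressing vertices outside the bag of degree at most 2. -/
def TCD.tor (D : TCD G) (t : Fin D.n) : ℕ :=
  (reduce ((D.bag t).image Sum.inl) 2 true (D.torsoS t) (D.torsoE t)).card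

/-- The order of the 2-center of the torso at `t`, obtained by exhaustively deleting
vertices outside the bag of degree at most 1. -/
def TCD.tor2 (D : TCD G) (t : Fin D.n) : ℕ :=
  (reduce ((D.bag t).image Sum.inl) 1 false (D.torsoS t) (D.torsoE t)).card

/-- The order of the 1-center of the torso at `t`, obtained by deleting isolated
vertices outside the bag. -/
def TCD.tor1 (D : TCD G) (t : Fin D.n) : ℕ :=
  (reduce ((D.bag t).image Sum.inl) 0 false (D.torsoS t) (D.torsoE t)).card

/-- Width of a tree-cut decomposition. -/
def TCD.width (D : TCD G) : ℕ := Finset.univ.sup fun t => max (D.adh t) (D.tor t)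

/-- Slim width of a tree-cut decomposition. -/
def TCD.slimWidth (D : TCD G) : ℕ := Finset.univ.sup fun t => max (D.adh t) (D.tor2 t)

/-- 0-width of a tree-cut decomposition. -/
def TCD.zeroWidth (D : TCD G) : ℕ := Finset.univ.sup fun t => max (D.adh t) (D.tor1 t)

/-- Tree-cut width. -/
def tcw {V : Type} [Fintype V] (G : SimpleGraph V) : ℕ :=
  sInf {k | ∃ D : TCD G, D.width ≤ k}

/-- Slim tree-cut width. -/
def stcw {V : Type} [Fintype V] (G : SimpleGraph V) : ℕ :=
  sInf {k | ∃ D : TCD G, D.slimWidth ≤ k}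

/-- 0-tree-cut width. -/
def tcw0 {V : Type} [Fintype V] (G : SimpleGraph V) : ℕ :=
  sInf {k | ∃ D : TCD G, D.zeroWidth ≤ k}


/-! ### Bundled finite graphs and weak immersions -/

structure FG where
  V : Type
  [fin : Fintype V]
  G : SimpleGraph V

attribute [instance] FG.fin

/-- One step of obtaining a graph from another: an isomorphic copy, deleting an edge,
deleting a vertex, or lifting a pair of incident edges `(x,y), (y,z)` (deleting them
and adding the edge `(x,z)`). `ImmStep B A` means `B` is obtained from `A`. -/
inductive ImmStep : FG → FG → Prop
  | iso (A B : FG) : (Nonempty (B.G ≃g A.G)) → ImmStep B A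
  | delEdge (A : FG) (e : Sym2 A.V) (he : e ∈ A.G.edgeSet) :
      ImmStep (FG.mk A.V (A.G.deleteEdges {e})) A
  | delVertex (A : FG) (v : A.V) :
      ImmStep (FG.mk {w : A.V // w ≠ v} (SimpleGraph.induce {w : A.V | w ≠ v} A.G)) A
  | lift (A : FG) (x y z : A.V) (hxy : A.G.Adj x y) (hyz : A.G.Adj y z) (hxz : x ≠ z) :
      ImmStep (FG.mk A.V (SimpleGraph.fromEdgeSet
        ((A.G.edgeSet \ {s(x, y), s(y, z)}) ∪ {s(x, z)}))) A

/-- `Immersion H G` : `G` contains `H` as a weak immersion, i.e. `H` can be obtained from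
`G` by a sequence of edge deletions, vertex deletions and liftings. -/
def Immersion (H G : FG) : Prop := Relation.ReflTransGen ImmStep H G

/-- `H` consists of `m` cycles intersecting in one vertex and otherwise pairwise
vertex-disjoint. -/
def IsFlower (m : ℕ) {W : Type} [Fintype W] (H : SimpleGraph W) : Prop :=
  H.Connected ∧ ∃ c : W, H.degree c = 2 * m ∧ ∀ v : W, v ≠ c → H.degree v = 2

/-- `H` consists of `m` paths with the same two endpoints which are otherwise pairwise
vertex-disjoint. -/
def IsTheta (m : ℕ) {W : Type} [Fintype W] (H : SimpleGraph W) : Prop :=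
  H.Connected ∧ ∃ x y : W, x ≠ y ∧ H.degree x = m ∧ H.degree y = m ∧
    (∀ v : W, v ≠ x → v ≠ y → H.degree v = 2) ∧
    (SimpleGraph.induce {v : W | v ≠ x} H).IsAcyclic ∧
    (SimpleGraph.induce {v : W | v ≠ y} H).IsAcyclic

/-- The star `K_{1,r}`. -/
def star (r : ℕ) : SimpleGraph (Fin 1 ⊕ Fin r) := completeBipartiteGraph (Fin 1) (Fin r)

/-- The windmill `W_r`: `r` triangles sharing one vertex, otherwise vertex-disjoint. -/
def windmill (r : ℕ) : SimpleGraph (Option (Fin r × Fin 2)) :=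
  SimpleGraph.fromRel (fun x y =>
    x = none ∨ ∃ (i : Fin r) (a b : Fin 2), x = some (i, a) ∧ y = some (i, b))

/-- `G` is the `k`-edge sum `G₁ ⊕ₖ G₂` at vertices `v₁, v₂` of degree `k`. -/
def IsEdgeSum {V₁ V₂ : Type} [Fintype V₁] [Fintype V₂] (k : ℕ)
    (G₁ : SimpleGraph V₁) (G₂ : SimpleGraph V₂) (v₁ : V₁) (v₂ : V₂)
    (G : SimpleGraph ({x : V₁ // x ≠ v₁} ⊕ {y : V₂ // y ≠ v₂})) : Prop :=
  G₁.degree v₁ = k ∧ G₂.degree v₂ = k ∧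
  ∃ π : V₁ → V₂, Set.BijOn π (G₁.neighborSet v₁) (G₂.neighborSet v₂) ∧
    (∀ a b : {x : V₁ // x ≠ v₁}, G.Adj (Sum.inl a) (Sum.inl b) ↔ G₁.Adj a b) ∧
    (∀ a b : {y : V₂ // y ≠ v₂}, G.Adj (Sum.inr a) (Sum.inr b) ↔ G₂.Adj a b) ∧
    (∀ (a : {x : V₁ // x ≠ v₁}) (b : {y : V₂ // y ≠ v₂}),
      G.Adj (Sum.inl a) (Sum.inr b) ↔ (G₁.Adj v₁ a ∧ π (a : V₁) = (b : V₂)))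

/-! ### Treewidth and maximum degree -/

/-- A tree decomposition of `G`. -/
structure TreeDecomp {V : Type} [Fintype V] (G : SimpleGraph V) where
  n : ℕ
  T : SimpleGraph (Fin n)
  tree : T.IsTree
  bag : Fin n → Finset V
  cover_v : ∀ v : V, ∃ t, v ∈ bag t
  cover_e : ∀ u v : V, G.Adj u v → ∃ t, u ∈ bag t ∧ v ∈ bag t
  coherent : ∀ v : V, (SimpleGraph.induce {t : Fin n | v ∈ bag t} T).Connected

/-- Width of a tree decomposition: maximum bag size minus one. -/
def TreeDecomp.width (D : TreeDecomp G) : ℕ :=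
  (Finset.univ.sup fun t => (D.bag t).card) - 1

/-- Treewidth. -/
def tw {V : Type} [Fintype V] (G : SimpleGraph V) : ℕ :=
  sInf {w | ∃ D : TreeDecomp G, D.width ≤ w}

/-- Maximum degree. -/
def maxDeg {V : Type} [Fintype V] (G : SimpleGraph V) : ℕ :=
  Finset.univ.sup fun v => G.degree v

/-! ### Edge-cut width, super edge-cut width, feedback edge number -/

/-- `T` is a maximal spanning forest of `G`. -/
def IsMSF {V : Type} (G T : SimpleGraph V) : Prop :=
  T ≤ G ∧ T.IsAcyclic ∧ ∀ u v : V, G.Adj u v → T.Reachable u v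

/-- The size of the local feedback edge set at `v`: edges of `G` outside `T` whose unique
`T`-path between their endpoints contains `v`. -/
def elocCard {V : Type} [Fintype V] (G T : SimpleGraph V) (v : V) : ℕ :=
  ((Finset.univ : Finset (Sym2 V)).filter fun e =>
    e ∈ G.edgeSet ∧ e ∉ T.edgeSet ∧
      ∃ a b : V, e = s(a, b) ∧ ∃ p : T.Walk a b, p.IsPath ∧ v ∈ p.support).card

/-- Edge-cut width of a pair `(G, T)`. -/
def ecwPair {V : Type} [Fintype V] (G T : SimpleGraph V) : ℕ :=
  1 + Finset.univ.sup fun v => elocCard G T v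

/-- Edge-cut width. -/
def ecw {V : Type} [Fintype V] (G : SimpleGraph V) : ℕ :=
  sInf {k | ∃ T : SimpleGraph V, IsMSF G T ∧ ecwPair G T ≤ k}

/-- Super edge-cut width: minimum edge-cut width over all supergraphs of `G`. -/
def secw {V : Type} [Fintype V] (G : SimpleGraph V) : ℕ :=
  sInf {k | ∃ (W : Type) (fW : Fintype W) (H : SimpleGraph W) (ι : V ↪ W),
    (∀ u v : V, G.Adj u v → H.Adj (ι u) (ι v)) ∧
    ∃ T : SimpleGraph W, IsMSF H T ∧ @ecwPair W fW H T ≤ k}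

/-- Feedback edge number: minimum number of edges whose deletion makes `G` a forest. -/
def fen {V : Type} [Fintype V] (G : SimpleGraph V) : ℕ :=
  sInf {m | ∃ F : Finset (Sym2 V), ↑F ⊆ G.edgeSet ∧ F.card = m ∧
    (G.deleteEdges ↑F).IsAcyclic}

/-! ### Nice decompositions -/

/-- The children of `t` in the rooted tree of `D`. -/
def TCD.children (D : TCD G) (t : Fin D.n) : Finset (Fin D.n) :=
  Finset.univ.filter fun s => D.T.Adj t s ∧ s ∈ D.desc t

/-- The neighborhood of a vertex set `S` in `G`. -/
def nbhd {V : Type} [Fintype V] (G : SimpleGraph V) (S : Finset V) : Finset V :=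
  Finset.univ.filter fun v => v ∉ S ∧ ∃ u ∈ S, G.Adj u v

/-- A non-root node is thin if its adhesion is at most 2. -/
def TCD.IsThin (D : TCD G) (t : Fin D.n) : Prop := t ≠ D.root ∧ D.adh t ≤ 2

/-- A tree-cut decomposition is nice if for every thin node `t`, `N(Y_t)` avoids the
sets `Y_b` of all siblings `b` of `t`. -/
def TCD.IsNice (D : TCD G) : Prop :=
  ∀ t : Fin D.n, D.IsThin t →
    ∀ p b : Fin D.n, t ∈ D.children p → b ∈ D.children p → b ≠ t →
      ∀ v ∈ nbhd G (D.Y t), v ∉ D.Y b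

/-- `B_t`: the thin children `b` of `t` with `|N(Y_b)| ≤ 2` and `N(Y_b) ⊆ X_t`. -/
def TCD.B (D : TCD G) (t : Fin D.n) : Finset (Fin D.n) :=
  (D.children t).filter fun b => (nbhd G (D.Y b)).card ≤ 2 ∧ nbhd G (D.Y b) ⊆ D.bag t

/-- `B_t^{(2)}`: the members of `B_t` of adhesion exactly 2. -/
def TCD.B2 (D : TCD G) (t : Fin D.n) : Finset (Fin D.n) :=
  (D.B t).filter fun b => D.adh b = 2

end PaperSTCW


namespace PaperSTCW

section Aux

lemma mdeg_eq_zero_not_mem {W : Type} {E : Multiset (Sym2 W)} {w : W}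
    (h : mdeg E w = 0) : ∀ e ∈ E, w ∉ e := by
  intro e he hw
  have : ∀ x ∈ E.map (fun e => if e = Sym2.diag w then 2 else if w ∈ e then 1 else 0),
      x = 0 := by
    rw [← Multiset.sum_eq_zero_iff]; exact h
  have := this _ (Multiset.mem_map_of_mem _ he)
  by_cases hd : e = Sym2.diag w <;> simp [hd, hw] at this

lemma nextE_false_eq {W : Type} {E : Multiset (Sym2 W)} {w : W}
    (h : mdeg E w = 0) : nextE false w E = E := by
  unfold nextE
  simp only [Bool.false_eq_true, if_false, add_zero]
  exact Multiset.filter_eq_self.2 (fun e he => mdeg_eq_zero_not_mem h e he)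

lemma mem_reduce_zero {W : Type} (X : Finset W) (v : W) :
    ∀ (n : ℕ) (S : Finset W), S.card = n → ∀ (E : Multiset (Sym2 W)),
      v ∈ S → (v ∈ X ∨ 1 ≤ mdeg E v) → v ∈ reduce X 0 false S E := by
  intro n
  induction n using Nat.strong_induction_on with
  | _ n ih =>
    intro S hcard E hvS hv
    rw [reduce]
    split
    · next h =>
      obtain ⟨hwS, hwX, hwdeg⟩ := h.choose_spec
      have hw0 : mdeg E h.choose = 0 := Nat.le_zero.mp hwdeg
      have hne : h.choose ≠ v := by
        rintro rfl
        rcases hv with h' | h'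
        · exact hwX h'
        · omega
      have hE : nextE false h.choose E = E := nextE_false_eq hw0
      exact ih (S.erase h.choose).card
        (by rw [← hcard]; exact Finset.card_erase_lt_of_mem hwS) _ rfl _
        (Finset.mem_erase.2 ⟨fun hh => hne hh.symm, hvS⟩) (by rw [hE]; exact hv)
    · exact hvS

end Aux

end PaperSTCW


namespace PaperSTCW

section Tree
open SimpleGraph
variable {V : Type} [Fintype V] {G : SimpleGraph V} (D : TCD G)

/-- The unique path from the root to `s`. -/
noncomputable def TCD.pth (s : Fin D.n) : D.T.Walk D.root s :=
  (D.tree.existsUnique_path D.root s).choose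

lemma TCD.pth_isPath (s : Fin D.n) : (D.pth s).IsPath :=
  (D.tree.existsUnique_path D.root s).choose_spec.1

lemma TCD.path_eq_pth {s : Fin D.n} (p : D.T.Walk D.root s) (hp : p.IsPath) :
    p = D.pth s :=
  (D.tree.existsUnique_path D.root s).choose_spec.2 p hp

lemma TCD.mem_desc_iff {u s : Fin D.n} :
    s ∈ D.desc u ↔ u ∈ (D.pth s).support := by
  constructor
  · intro h; exact h (D.pth s)
  · intro h p
    have hb : p.bypass = D.pth s := D.path_eq_pth p.bypass p.bypass_isPath
    exact p.support_bypass_subset (hb ▸ h)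

lemma TCD.self_mem_desc (t : Fin D.n) : t ∈ D.desc t :=
  fun p => p.end_mem_support

lemma TCD.pth_step {s s' : Fin D.n} (h : D.T.Adj s s') {x : Fin D.n}
    (hx : x ∈ (D.pth s').support) : x ∈ (D.pth s).support ∨ x = s' := by
  have hb : ((D.pth s).concat h).bypass = D.pth s' :=
    D.path_eq_pth _ (SimpleGraph.Walk.bypass_isPath _)
  have hsub := ((D.pth s).concat h).support_bypass_subset
  rw [hb] at hsub
  have := hsub hx
  rw [SimpleGraph.Walk.support_concat] at this
  rw [List.mem_append, List.mem_singleton] at this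
  exact this

lemma TCD.step_t {t a c : Fin D.n} (hadj : D.T.Adj a c) (ha : a ≠ t)
    (h : t ∈ (D.pth a).support) : t ∈ (D.pth c).support := by
  rcases D.pth_step hadj.symm h with h' | h'
  · exact h'
  · exact absurd h'.symm ha

lemma TCD.walk_t_mem {t : Fin D.n} :
    ∀ {a b : {s : Fin D.n | s ≠ t}}
      (_ : (SimpleGraph.induce {s : Fin D.n | s ≠ t} D.T).Walk a b),
      t ∈ (D.pth a.1).support → t ∈ (D.pth b.1).support := by
  intro a b p
  induction p with
  | nil => exact id
  | @cons a c b h q ih =>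
    intro ht
    exact ih (D.step_t h a.2 ht)

lemma TCD.walk_t_not_mem {t : Fin D.n} :
    ∀ {a b : {s : Fin D.n | s ≠ t}}
      (_ : (SimpleGraph.induce {s : Fin D.n | s ≠ t} D.T).Walk a b),
      t ∉ (D.pth a.1).support → t ∉ (D.pth b.1).support := by
  intro a b p
  induction p with
  | nil => exact id
  | @cons a c b h q ih =>
    intro ht
    apply ih
    intro htc
    rcases D.pth_step (h : D.T.Adj a.1 c.1) htc with h' | h'
    · exact ht h'
    · exact c.2 h'.symm

lemma TCD.walk_s0_mem {t s₀ : Fin D.n} (hts : D.T.Adj t s₀) :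
    ∀ {a b : {s : Fin D.n | s ≠ t}}
      (_ : (SimpleGraph.induce {s : Fin D.n | s ≠ t} D.T).Walk a b),
      t ∈ (D.pth a.1).support → s₀ ∈ (D.pth a.1).support →
        s₀ ∈ (D.pth b.1).support := by
  intro a b p
  induction p with
  | nil => exact fun _ h => h
  | @cons a c b h q ih =>
    intro ht hs
    have hadj : D.T.Adj a.1 c.1 := h
    have htc : t ∈ (D.pth c.1).support := D.step_t hadj a.2 ht
    refine ih htc ?_
    rcases D.pth_step hadj.symm hs with h' | h'
    · exact h'
    · -- s₀ = a.1; show s₀ ∈ pth c by contradiction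
      rw [h']
      have hts' : D.T.Adj t a.1 := h' ▸ hts
      by_contra hns
      have hdp : ((D.pth c.1).dropUntil t htc).IsPath :=
        (D.pth_isPath c.1).dropUntil htc
      have hadj2 : D.T.Adj a.1 c.1 := hadj
      set Z : D.T.Walk a.1 t :=
        SimpleGraph.Walk.cons hadj2 ((D.pth c.1).dropUntil t htc).reverse with hZ
      have hZpath : Z.IsPath := by
        rw [hZ, SimpleGraph.Walk.cons_isPath_iff]
        refine ⟨hdp.reverse, ?_⟩
        rw [SimpleGraph.Walk.support_reverse]
        intro hmem
        exact hns ((D.pth c.1).support_dropUntil_subset htc (List.mem_reverse.1 hmem))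
      have hE : (SimpleGraph.Walk.cons hts'.symm SimpleGraph.Walk.nil :
          D.T.Walk a.1 t).IsPath := by
        rw [SimpleGraph.Walk.cons_isPath_iff]
        refine ⟨SimpleGraph.Walk.IsPath.nil, ?_⟩
        simp only [SimpleGraph.Walk.support_nil, List.mem_singleton]
        exact fun hh => a.2 hh
      have := (D.tree.existsUnique_path a.1 t).unique hZpath hE
      have hlen := congrArg SimpleGraph.Walk.length this
      simp only [hZ, SimpleGraph.Walk.length_cons, SimpleGraph.Walk.length_reverse,
        SimpleGraph.Walk.length_nil] at hlen
      have h0 : ((D.pth c.1).dropUntil t htc).length = 0 := by omega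
      exact c.2 (SimpleGraph.Walk.eq_of_length_eq_zero h0).symm

end Tree

end PaperSTCW


namespace PaperSTCW

section Main
open SimpleGraph

variable {V : Type} [Fintype V] {G : SimpleGraph V}

lemma TCD.toTorso_spec (D : TCD G) (t : Fin D.n) (v : V) :
    (v ∈ D.bag t ∧ D.toTorso t v = Sum.inl v) ∨
    (∃ (w : Fin D.n) (hw : w ≠ t), v ∈ D.bag w ∧ D.toTorso t v =
      Sum.inr ((SimpleGraph.induce {s | s ≠ t} D.T).connectedComponentMk ⟨w, hw⟩)) := by
  unfold TCD.toTorso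
  split
  · next h => exact Or.inr ⟨h.choose, h.choose_spec.1, h.choose_spec.2, rfl⟩
  · next h =>
    push_neg at h
    obtain ⟨s, hs, huniq⟩ := D.partition v
    have hst : s = t := by
      by_contra hst
      exact h s hst hs
    exact Or.inl ⟨hst ▸ hs, rfl⟩

lemma TCD.mem_Y_iff' (D : TCD G) {u s : Fin D.n} {v : V} (hs : v ∈ D.bag s) :
    v ∈ D.Y u ↔ s ∈ D.desc u := by
  obtain ⟨w, hw, huniq⟩ := D.partition v
  unfold TCD.Y
  simp only [Finset.mem_filter, Finset.mem_univ, true_and]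
  constructor
  · rintro ⟨x, hx, hvx⟩
    rwa [(huniq x hvx).trans (huniq s hs).symm] at hx
  · intro h
    exact ⟨s, h, hs⟩

lemma star_adj {r : ℕ} (i : Fin r) :
    (star r).Adj (Sum.inl 0) (Sum.inr i) := by
  simp [star]

lemma adh_ge {r : ℕ} (D : TCD (star r)) (u : Fin D.n) (F : Finset (Fin r))
    (hmem : ∀ i ∈ F,
      (Sum.inr i ∈ D.Y u ∧ (Sum.inl 0 : Fin 1 ⊕ Fin r) ∉ D.Y u) ∨
      (Sum.inr i ∉ D.Y u ∧ (Sum.inl 0 : Fin 1 ⊕ Fin r) ∈ D.Y u)) :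
    F.card ≤ D.adh u := by
  unfold TCD.adh
  apply Finset.card_le_card_of_injOn
    (fun i => s((Sum.inl 0 : Fin 1 ⊕ Fin r), Sum.inr i))
  · intro i hi
    simp only [Finset.mem_coe, Finset.mem_filter, Finset.mem_univ, true_and]
    refine ⟨(SimpleGraph.mem_edgeSet _).2 (star_adj i), ?_⟩
    rcases hmem i hi with ⟨h1, h2⟩ | ⟨h1, h2⟩
    · exact ⟨Sum.inr i, Sum.inl 0, Sym2.eq_swap.symm, h1, h2⟩
    · exact ⟨Sum.inl 0, Sum.inr i, rfl, h2, h1⟩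
  · intro i _ j _ hij
    simp only [Sym2.eq_iff] at hij
    rcases hij with ⟨_, h⟩ | ⟨h, _⟩
    · exact Sum.inr.inj h
    · exact absurd h (by simp)

/-- The trivial one-node tree-cut decomposition. -/
noncomputable def trivialTCD (G : SimpleGraph V) : TCD G where
  n := 1
  T := ⊥
  tree := by
    constructor
    · constructor
      · intro u v
        have h : u = v := Subsingleton.elim u v
        subst h
        exact SimpleGraph.Reachable.refl u
    · intro v c hc
      cases c with
      | nil => exact hc.ne_nil rfl
      | cons h q => exact h.elim
  root := 0
  bag := fun _ => Finset.univ
  partition := fun v => ⟨0, Finset.mem_univ v, fun y _ => Subsingleton.elim y 0⟩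

end Main

end PaperSTCW


namespace PaperSTCW

open SimpleGraph

lemma mdeg_pos {W : Type} {E : Multiset (Sym2 W)} {v : W} {e : Sym2 W}
    (he : e ∈ E) (hv : v ∈ e) : 1 ≤ mdeg E v := by
  unfold mdeg
  refine le_trans ?_ (Multiset.single_le_sum (fun x _ => Nat.zero_le x)
    (if e = Sym2.diag v then 2 else if v ∈ e then 1 else 0)
    (Multiset.mem_map_of_mem _ he))
  by_cases h : e = Sym2.diag v
  · rw [if_pos h]; omega
  · rw [if_neg h, if_pos hv]

section Helpers

variable {V : Type} [Fintype V] {G : SimpleGraph V}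

lemma TCD.mem_X_inl (D : TCD G) {t : Fin D.n} {v : V} (hv : v ∈ D.bag t) :
    (Sum.inl v : V ⊕ D.Cmp t) ∈ (D.bag t).image Sum.inl :=
  Finset.mem_image_of_mem _ hv

lemma TCD.mem_torsoS_inl (D : TCD G) {t : Fin D.n} {v : V} (hv : v ∈ D.bag t) :
    (Sum.inl v : V ⊕ D.Cmp t) ∈ D.torsoS t :=
  Finset.mem_union.2 (Or.inl (D.mem_X_inl hv))

lemma TCD.mem_torsoS_inr (D : TCD G) {t : Fin D.n} (κ : D.Cmp t) :
    (Sum.inr κ : V ⊕ D.Cmp t) ∈ D.torsoS t :=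
  Finset.mem_union.2 (Or.inr (Finset.mem_image_of_mem _ (Finset.mem_univ κ)))

lemma TCD.tor1_lower (D : TCD G) (t : Fin D.n) (K : Finset (V ⊕ D.Cmp t))
    (hK : ∀ y ∈ K, y ∈ D.torsoS t ∧
      (y ∈ (D.bag t).image Sum.inl ∨ 1 ≤ mdeg (D.torsoE t) y)) :
    K.card ≤ D.tor1 t := by
  unfold TCD.tor1
  apply Finset.card_le_card
  intro y hy
  exact mem_reduce_zero _ _ _ _ rfl _ (hK y hy).1 (hK y hy).2

lemma TCD.mdeg_torsoE_ge (D : TCD G) (t : Fin D.n) {a b : V} (hab : G.Adj a b)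
    {κ : D.Cmp t} (ha : D.toTorso t a = Sum.inl a) (hb : D.toTorso t b = Sum.inr κ) :
    1 ≤ mdeg (D.torsoE t) (Sum.inr κ) := by
  have he : Sym2.map (D.toTorso t) s(a, b)
      = s(Sum.inl a, (Sum.inr κ : V ⊕ D.Cmp t)) := by
    rw [Sym2.map_pair_eq, ha, hb]
  have hmem : (s(Sum.inl a, Sum.inr κ) : Sym2 (V ⊕ D.Cmp t)) ∈ D.torsoE t := by
    unfold TCD.torsoE
    rw [Multiset.mem_filter]
    refine ⟨?_, ?_⟩
    · rw [← he]
      apply Multiset.mem_map_of_mem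
      rw [Finset.mem_val, Finset.mem_filter]
      exact ⟨Finset.mem_univ _, (SimpleGraph.mem_edgeSet _).2 hab⟩
    · rw [Sym2.mk_isDiag_iff]
      simp
  exact mdeg_pos hmem (by simp)

end Helpers

lemma key (r : ℕ) (hr : 1 ≤ r) (D : TCD (star (r ^ 2))) : r ≤ D.zeroWidth := by
  by_contra hlt
  push_neg at hlt
  set W := D.zeroWidth with hW
  obtain ⟨t, hct, hect⟩ := D.partition (Sum.inl 0 : Fin 1 ⊕ Fin (r ^ 2))
  have hadh : ∀ u, D.adh u ≤ W := fun u =>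
    le_trans (le_max_left (D.adh u) (D.tor1 u))
      (Finset.le_sup (f := fun u => max (D.adh u) (D.tor1 u)) (Finset.mem_univ u))
  have htor : D.tor1 t ≤ W :=
    le_trans (le_max_right (D.adh t) (D.tor1 t))
      (Finset.le_sup (f := fun u => max (D.adh u) (D.tor1 u)) (Finset.mem_univ t))
  set f : Fin (r ^ 2) → (Fin 1 ⊕ Fin (r ^ 2)) ⊕ D.Cmp t :=
    fun i => D.toTorso t (Sum.inr i) with hf
  have hcT : D.toTorso t (Sum.inl 0) = Sum.inl (Sum.inl 0) := by
    rcases D.toTorso_spec t (Sum.inl 0) with ⟨_, h⟩ | ⟨w, hw, hbw, _⟩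
    · exact h
    · exact absurd (hect w hbw) hw
  have hk1' : (insert (Sum.inl (Sum.inl 0)) (Finset.univ.image f)).card ≤ D.tor1 t := by
    apply D.tor1_lower
    intro y hy
    rcases Finset.mem_insert.1 hy with rfl | hy
    · exact ⟨D.mem_torsoS_inl hct, Or.inl (D.mem_X_inl hct)⟩
    · obtain ⟨i, _, rfl⟩ := Finset.mem_image.1 hy
      rcases D.toTorso_spec t (Sum.inr i) with ⟨hbag, heq⟩ | ⟨w, hw, hbag, heq⟩
      · simp only [hf]
        rw [heq]
        exact ⟨D.mem_torsoS_inl hbag, Or.inl (D.mem_X_inl hbag)⟩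
      · simp only [hf]
        rw [heq]
        refine ⟨D.mem_torsoS_inr _, Or.inr ?_⟩
        exact D.mdeg_torsoE_ge t (star_adj i) hcT heq
  have hnotin : (Sum.inl (Sum.inl 0) : (Fin 1 ⊕ Fin (r ^ 2)) ⊕ D.Cmp t)
      ∉ Finset.univ.image f := by
    rw [Finset.mem_image]
    rintro ⟨i, _, hfi⟩
    simp only [hf] at hfi
    rcases D.toTorso_spec t (Sum.inr i) with ⟨_, heq⟩ | ⟨w, hw, _, heq⟩
    · rw [heq] at hfi
      simp at hfi
    · rw [heq] at hfi
      simp at hfi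
  have hk1 : (Finset.univ.image f).card + 1 ≤ W := by
    rw [Finset.card_insert_of_notMem hnotin] at hk1'
    omega
  have hdata : ∀ (κ : D.Cmp t) (i : Fin (r ^ 2)), f i = Sum.inr κ →
      ∃ (w : Fin D.n) (hw : w ≠ t), Sum.inr i ∈ D.bag w ∧
        (SimpleGraph.induce {s | s ≠ t} D.T).connectedComponentMk ⟨w, hw⟩ = κ := by
    intro κ i hi
    simp only [hf] at hi
    rcases D.toTorso_spec t (Sum.inr i) with ⟨_, heq⟩ | ⟨w, hw, hbag, heq⟩
    · rw [heq] at hi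
      simp at hi
    · rw [heq] at hi
      exact ⟨w, hw, hbag, Sum.inr.inj hi⟩
  have hfib : ∀ y ∈ Finset.univ.image f,
      (Finset.univ.filter fun i => f i = y).card ≤ W := by
    intro y hy
    obtain ⟨i₀, _, hi₀⟩ := Finset.mem_image.1 hy
    cases y with
    | inl w =>
      refine le_trans (Finset.card_le_one.2 ?_) (by omega)
      intro i hi j hj
      rw [Finset.mem_filter] at hi hj
      have hgen : ∀ a : Fin (r ^ 2), f a = Sum.inl w → Sum.inr a = w := by
        intro a ha
        simp only [hf] at ha
        rcases D.toTorso_spec t (Sum.inr a) with ⟨_, heq⟩ | ⟨x, hx, _, heq⟩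
        · rw [heq] at ha
          exact Sum.inl.inj ha
        · rw [heq] at ha
          simp at ha
      exact Sum.inr.inj ((hgen i hi.2).trans (hgen j hj.2).symm)
    | inr κ =>
      obtain ⟨w₀, hw₀, hbag₀, hκ₀⟩ := hdata κ i₀ hi₀
      by_cases hlow : t ∈ (D.pth w₀).support
      · -- low case
        set q := (D.pth w₀).dropUntil t hlow with hq
        have hqlen : 0 < q.length := by
          rcases Nat.eq_zero_or_pos q.length with h0 | h0
          · exact absurd (SimpleGraph.Walk.eq_of_length_eq_zero h0) (Ne.symm hw₀)
          · exact h0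
        set s₀ := q.getVert 1 with hs₀def
        have hadjts : D.T.Adj t s₀ := by
          have := q.adj_getVert_succ hqlen
          rwa [SimpleGraph.Walk.getVert_zero] at this
        have hs₀ne : s₀ ≠ t := hadjts.ne'
        have hs₀q : s₀ ∈ q.support :=
          SimpleGraph.Walk.mem_support_iff_exists_getVert.2 ⟨1, rfl, hqlen⟩
        have hs₀w : s₀ ∈ (D.pth w₀).support :=
          (D.pth w₀).support_dropUntil_subset hlow hs₀q
        have hts₀ : s₀ ∉ (D.pth t).support := by
          intro hmem
          have htake : (D.pth w₀).takeUntil t hlow = D.pth t :=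
            D.path_eq_pth _ ((D.pth_isPath w₀).takeUntil hlow)
          have hnd := (D.pth_isPath w₀).support_nodup
          rw [← SimpleGraph.Walk.take_spec (D.pth w₀) hlow,
            SimpleGraph.Walk.support_append] at hnd
          have h1 : s₀ ∈ ((D.pth w₀).takeUntil t hlow).support := htake ▸ hmem
          have h2 : s₀ ∈ q.support.tail := by
            have hq' := q.support_eq_cons
            rw [hq'] at hs₀q
            rcases List.mem_cons.1 hs₀q with h | h
            · exact absurd h hs₀ne
            · exact h
          exact List.disjoint_of_nodup_append hnd h1 h2
        refine le_trans (adh_ge D s₀ _ ?_) (hadh s₀)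
        intro i hi
        rw [Finset.mem_filter] at hi
        obtain ⟨wi, hwi, hbagi, hκi⟩ := hdata κ i hi.2
        left
        constructor
        · rw [D.mem_Y_iff' hbagi, D.mem_desc_iff]
          have hreach : (SimpleGraph.induce {s | s ≠ t} D.T).Reachable
              ⟨w₀, hw₀⟩ ⟨wi, hwi⟩ :=
            SimpleGraph.ConnectedComponent.eq.1 (hκ₀.trans hκi.symm)
          obtain ⟨p⟩ := hreach
          exact D.walk_s0_mem hadjts p hlow hs₀w
        · rw [D.mem_Y_iff' hct, D.mem_desc_iff]
          exact hts₀
      · -- high case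
        refine le_trans (adh_ge D t _ ?_) (hadh t)
        intro i hi
        rw [Finset.mem_filter] at hi
        obtain ⟨wi, hwi, hbagi, hκi⟩ := hdata κ i hi.2
        right
        constructor
        · rw [D.mem_Y_iff' hbagi, D.mem_desc_iff]
          intro hmem
          have hreach : (SimpleGraph.induce {s | s ≠ t} D.T).Reachable
              ⟨wi, hwi⟩ ⟨w₀, hw₀⟩ :=
            SimpleGraph.ConnectedComponent.eq.1 (hκi.trans hκ₀.symm)
          obtain ⟨p⟩ := hreach
          exact hlow (D.walk_t_mem p hmem)
        · rw [D.mem_Y_iff' hct]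
          exact D.self_mem_desc t
  have h0 : (Finset.univ : Finset (Fin (r ^ 2))).card
      = ∑ y ∈ Finset.univ.image f, (Finset.univ.filter fun i => f i = y).card :=
    Finset.card_eq_sum_card_fiberwise
      (fun i _ => Finset.mem_image_of_mem f (Finset.mem_univ i))
  rw [Finset.card_fin] at h0
  have h2 : ∑ _y ∈ Finset.univ.image f, W = (Finset.univ.image f).card * W := by
    rw [Finset.sum_const, smul_eq_mul]
  have hcount : r ^ 2 ≤ (Finset.univ.image f).card * W :=
    h0.trans_le (le_trans (Finset.sum_le_sum hfib) (le_of_eq h2))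
  set k := (Finset.univ.image f).card with hk
  have hWr : W + 1 ≤ r := hlt
  have hmul1 : (k + 1) * (W + 1) ≤ W * r := Nat.mul_le_mul hk1 hWr
  have hmul2 : (W + 1) * r ≤ r * r := Nat.mul_le_mul_right r hWr
  have hr2 : r ^ 2 = r * r := pow_two r
  nlinarith [hcount, hmul1, hmul2]

end PaperSTCW

namespace PaperSTCW
/-- For every r ≥ 1, tcw₀ of the star `S_{r²} = K_{1,r²}` is at least `r`. -/
theorem stmt0 (r : ℕ) (hr : 1 ≤ r) : r ≤ tcw0 (star (r ^ 2)) := by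
  unfold tcw0
  apply le_csInf
  · exact ⟨(trivialTCD (star (r ^ 2))).zeroWidth, trivialTCD (star (r ^ 2)), le_refl _⟩
  · rintro k ⟨D, hD⟩
    exact le_trans (key r hr D) hD
end PaperSTCW
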